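/- Let n ≥ 1, L > 0, and let f : [0,1]^{n} → ℝ be of the form f = φ₁ − φ₂, where for i = 1, 2 the function φ_i is convex on [0,1]^{n} and admits a subgradient selection s_i on [0,1]^{n} with ‖s_i(x)‖_∞ ≤ L for all x ∈ [0,1]^{n}. Then for every ε > 0 there exist max-affine functions h₁ and h₂, each with at most K = ⌈(144 n L / ε)^{n/2}⌉ pieces, such that sup_{x ∈ [0,1]^{n}} |f(x) − (h₁(x) − h₂(x))| ≤ ε; moreover h_i can be taken of the form h_i(x) = max_{1≤j≤K} ( φ_i(x̂_j^{(i)}) + ⟨s_i(x̂_j^{(i)}), x − x̂_j^{(i)}⟩ ) for points x̂_j^{(i)} ∈ [0,1]^{n}, so that h_i ≤ φ_i pointwise on [0,1]^{n}. -/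

import Mathlib

open scoped RealInnerProductSpace

lemma key_inner_bound {n : ℕ} (L r : ℝ) (hL : 0 < L)
    (a b : EuclideanSpace ℝ (Fin n))
    (hba : 0 ≤ ⟪b, a⟫) (hc : ∀ j, |a j + L⁻¹ * b j| ≤ r) :
    ⟪b, a⟫ ≤ L * n * r ^ 2 := by
  set c : EuclideanSpace ℝ (Fin n) := a + L⁻¹ • b with hcdef
  have hR : ⟪c, c⟫ = ⟪a, a⟫ + 2 * L⁻¹ * ⟪b, a⟫ + L⁻¹ ^ 2 * ⟪b, b⟫ := by
    rw [hcdef]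
    rw [real_inner_add_add_self]
    rw [real_inner_smul_right, real_inner_smul_left, real_inner_smul_right]
    rw [real_inner_comm a b]
    ring
  have hRsum : ⟪c, c⟫ = ∑ j, c j * c j := by
    simp only [PiLp.inner_apply, RCLike.inner_apply, conj_trivial]
  have hRle : ⟪c, c⟫ ≤ n * r ^ 2 := by
    rw [hRsum]
    calc ∑ j, c j * c j ≤ ∑ _j : Fin n, r ^ 2 := by
          apply Finset.sum_le_sum
          intro j _
          have := hc j
          have hcj : c j = a j + L⁻¹ * b j := by simp [hcdef]
          rw [hcj]
          have h2 := abs_le.mp this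
          nlinarith [h2.1, h2.2]
      _ = n * r ^ 2 := by simp [Finset.sum_const]
  have hLi : 0 < L⁻¹ := inv_pos.mpr hL
  have haa : ⟪a, a⟫ ≤ ⟪c, c⟫ := by
    have hbb0 := (real_inner_self_nonneg : (0:ℝ) ≤ ⟪b, b⟫)
    have h1 : 0 ≤ 2 * L⁻¹ * ⟪b, a⟫ := by positivity
    have h2 : 0 ≤ L⁻¹ ^ 2 * ⟪b, b⟫ := by positivity
    linarith
  have hbb : ⟪b, b⟫ ≤ L ^ 2 * ⟪c, c⟫ := by
    have haa' := (real_inner_self_nonneg : (0:ℝ) ≤ ⟪a, a⟫)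
    have h1 : 0 ≤ 2 * L⁻¹ * ⟪b, a⟫ := by positivity
    have h2 : L⁻¹ ^ 2 * ⟪b, b⟫ ≤ ⟪c, c⟫ := by linarith
    have : L ^ 2 * (L⁻¹ ^ 2 * ⟪b, b⟫) ≤ L ^ 2 * ⟪c, c⟫ := by nlinarith [sq_nonneg L]
    calc ⟪b, b⟫ = L ^ 2 * (L⁻¹ ^ 2 * ⟪b, b⟫) := by field_simp
      _ ≤ L ^ 2 * ⟪c, c⟫ := this
  have hcs : ⟪b, a⟫ ≤ ‖b‖ * ‖a‖ := real_inner_le_norm b a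
  have hna : ‖a‖ ^ 2 = ⟪a, a⟫ := real_inner_self_eq_norm_sq a ▸ rfl
  have hnb : ‖b‖ ^ 2 = ⟪b, b⟫ := real_inner_self_eq_norm_sq b ▸ rfl
  have hRnn : 0 ≤ ⟪c, c⟫ := real_inner_self_nonneg
  have hbaLR : ⟪b, a⟫ ≤ L * ⟪c, c⟫ := by
    nlinarith [sq_nonneg (‖b‖ - L * ‖a‖), norm_nonneg a, norm_nonneg b]
  calc ⟪b, a⟫ ≤ L * ⟪c, c⟫ := hbaLR
    _ ≤ L * (n * r ^ 2) := by nlinarith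
    _ = L * n * r ^ 2 := by ring

lemma gap_bound {n : ℕ} (L r : ℝ) (hL : 0 < L)
    (C : Set (EuclideanSpace ℝ (Fin n))) (φ : EuclideanSpace ℝ (Fin n) → ℝ)
    (s : EuclideanSpace ℝ (Fin n) → EuclideanSpace ℝ (Fin n))
    (hs : ∀ x ∈ C, ∀ u ∈ C, φ x + ⟪s x, u - x⟫ ≤ φ u)
    (x y : EuclideanSpace ℝ (Fin n)) (hx : x ∈ C) (hy : y ∈ C)
    (hclose : ∀ j, |(x j - y j) + L⁻¹ * (s x j - s y j)| ≤ r) :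
    φ x - (φ y + ⟪s y, x - y⟫) ≤ L * n * r ^ 2 := by
  have h1 := hs x hx y hy
  have h2 := hs y hy x hx
  have hrev : ⟪s x, y - x⟫ = -⟪s x, x - y⟫ := by
    rw [show y - x = -(x - y) by abel, inner_neg_right]
  have hba : ⟪s x - s y, x - y⟫ = ⟪s x, x - y⟫ - ⟪s y, x - y⟫ := inner_sub_left _ _ _
  have hba0 : 0 ≤ ⟪s x - s y, x - y⟫ := by rw [hba]; linarith
  have hb := key_inner_bound L r hL (x - y) (s x - s y) hba0 (by
    intro j
    have h3 : (x - y) j = x j - y j := by simp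
    have h4 : (s x - s y) j = s x j - s y j := by simp
    rw [h3, h4]
    exact hclose j)
  linarith

lemma idx_interval (m : ℕ) (hm : 1 ≤ m) (p : ℝ) (hp0 : 0 ≤ p) (hpm : p ≤ m) :
    ((min (m-1) ⌊p⌋₊ : ℕ) : ℝ) ≤ p ∧ p ≤ (min (m-1) ⌊p⌋₊ : ℕ) + 1 := by
  constructor
  · calc ((min (m-1) ⌊p⌋₊ : ℕ) : ℝ) ≤ (⌊p⌋₊ : ℝ) := by
          exact_mod_cast Nat.min_le_right _ _
      _ ≤ p := Nat.floor_le hp0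
  · rcases le_or_gt ⌊p⌋₊ (m-1) with h | h
    · have : min (m-1) ⌊p⌋₊ = ⌊p⌋₊ := min_eq_right h
      rw [this]
      exact (Nat.lt_floor_add_one p).le
    · have : min (m-1) ⌊p⌋₊ = m-1 := min_eq_left h.le
      rw [this]
      have : ((m-1 : ℕ) : ℝ) + 1 = m := by
        have : (1:ℕ) ≤ m := hm
        push_cast [Nat.cast_sub this]
        ring
      rw [this]
      exact hpm

lemma close_of_idx_eq (m : ℕ) (hm : 1 ≤ m) (u v : ℝ) (hu1 : -1 ≤ u) (hu2 : u ≤ 2)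
    (hv1 : -1 ≤ v) (hv2 : v ≤ 2)
    (h : min (m-1) ⌊(u+1)*m/3⌋₊ = min (m-1) ⌊(v+1)*m/3⌋₊) : |u - v| ≤ 3 / m := by
  have hm0 : (0:ℝ) < m := by exact_mod_cast hm
  set p := (u+1)*m/3 with hp
  set q := (v+1)*m/3 with hq
  have hp0 : 0 ≤ p := by rw [hp]; nlinarith
  have hq0 : 0 ≤ q := by rw [hq]; nlinarith
  have hpm : p ≤ m := by rw [hp]; nlinarith
  have hqm : q ≤ m := by rw [hq]; nlinarith
  have h1 := idx_interval m hm p hp0 hpm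
  have h2 := idx_interval m hm q hq0 hqm
  rw [h] at h1
  have hpq : |p - q| ≤ 1 := by
    rw [abs_le]; constructor <;> linarith [h1.1, h1.2, h2.1, h2.2]
  have huv : u - v = (p - q) * (3 / m) := by
    rw [hp, hq]; field_simp; ring
  rw [huv, abs_mul, abs_of_pos (by positivity : (0:ℝ) < 3 / m)]
  nlinarith [abs_nonneg (p - q), (by positivity : (0:ℝ) < 3 / m)]

lemma count_lemma (n : ℕ) (hn : 1 ≤ n) (L ε : ℝ) (hL : 0 < L) (hε : 0 < ε) :
    (⌈Real.sqrt (18 * n * L / ε)⌉₊ : ℕ) ^ n ≤ ⌈(144 * n * L / ε) ^ ((n : ℝ) / 2)⌉₊ := by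
  have hn0 : (0:ℝ) < n := by exact_mod_cast hn
  have hB : (0:ℝ) < 18 * n * L / ε := by positivity
  have hA : (0:ℝ) < 144 * n * L / ε := by positivity
  set m : ℕ := ⌈Real.sqrt (18 * n * L / ε)⌉₊ with hmdef
  have hK1 : 1 ≤ ⌈(144 * n * L / ε) ^ ((n : ℝ) / 2)⌉₊ :=
    Nat.one_le_ceil_iff.mpr (Real.rpow_pos_of_pos hA _)
  rcases le_or_gt m 1 with hm1 | hm2
  · calc m ^ n ≤ 1 ^ n := Nat.pow_le_pow_left hm1 n
      _ = 1 := one_pow n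
      _ ≤ _ := hK1
  · have hsq : (1:ℝ) < Real.sqrt (18 * n * L / ε) := by
      have := Nat.lt_ceil.mp hm2
      exact_mod_cast this
    have hmlt : (m:ℝ) < Real.sqrt (18 * n * L / ε) + 1 :=
      Nat.ceil_lt_add_one (Real.sqrt_nonneg _)
    have hm2s : (m:ℝ) ≤ 2 * Real.sqrt (18 * n * L / ε) := by linarith
    have h72 : 2 * Real.sqrt (18 * n * L / ε) = Real.sqrt (72 * n * L / ε) := by
      rw [show (72 : ℝ) * n * L / ε = 4 * (18 * n * L / ε) by ring,
        Real.sqrt_mul (by norm_num : (0:ℝ) ≤ 4),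
        show Real.sqrt 4 = 2 by
          rw [show (4:ℝ) = 2 ^ 2 by norm_num, Real.sqrt_sq (by norm_num : (0:ℝ) ≤ 2)]]
    have h144 : Real.sqrt (72 * n * L / ε) ≤ Real.sqrt (144 * n * L / ε) := by
      apply Real.sqrt_le_sqrt
      have h1 : (0:ℝ) < 72 * n * L := by positivity
      rw [div_le_div_iff_of_pos_right hε]
      nlinarith
    have hmfin : (m:ℝ) ≤ (144 * n * L / ε) ^ ((1:ℝ)/2) := by
      rw [← Real.sqrt_eq_rpow]
      linarith
    have hfinal : ((m:ℝ)) ^ n ≤ (144 * n * L / ε) ^ ((n:ℝ) / 2) := by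
      have h1 : ((m:ℝ)) ^ n ≤ ((144 * n * L / ε) ^ ((1:ℝ)/2)) ^ n :=
        pow_le_pow_left₀ (by positivity) hmfin n
      have h2 : ((144 * n * L / ε) ^ ((1:ℝ)/2)) ^ n = (144 * n * L / ε) ^ ((n:ℝ) / 2) := by
        rw [← Real.rpow_natCast ((144 * n * L / ε) ^ ((1:ℝ)/2)) n, ← Real.rpow_mul hA.le]
        ring_nf
      linarith
    have : ((m ^ n : ℕ) : ℝ) ≤ (⌈(144 * n * L / ε) ^ ((n : ℝ) / 2)⌉₊ : ℝ) := by
      push_cast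
      exact le_trans hfinal (Nat.le_ceil _)
    exact_mod_cast this

theorem dc_approx_by_maxAffine (n : ℕ) (hn : 1 ≤ n) (L : ℝ) (hL : 0 < L)
    (f : EuclideanSpace ℝ (Fin n) → ℝ)
    (φ : Fin 2 → EuclideanSpace ℝ (Fin n) → ℝ)
    (s : Fin 2 → EuclideanSpace ℝ (Fin n) → EuclideanSpace ℝ (Fin n))
    (hφ : ∀ i, ConvexOn ℝ {x : EuclideanSpace ℝ (Fin n) | ∀ j, x j ∈ Set.Icc (0:ℝ) 1} (φ i))
    (hf : ∀ x ∈ {x : EuclideanSpace ℝ (Fin n) | ∀ j, x j ∈ Set.Icc (0:ℝ) 1},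
      f x = φ 0 x - φ 1 x)
    (hs : ∀ i, ∀ x ∈ {x : EuclideanSpace ℝ (Fin n) | ∀ j, x j ∈ Set.Icc (0:ℝ) 1},
      ∀ u ∈ {x : EuclideanSpace ℝ (Fin n) | ∀ j, x j ∈ Set.Icc (0:ℝ) 1},
        φ i x + ⟪s i x, u - x⟫ ≤ φ i u)
    (hsL : ∀ i, ∀ x ∈ {x : EuclideanSpace ℝ (Fin n) | ∀ j, x j ∈ Set.Icc (0:ℝ) 1},
      ∀ j, |s i x j| ≤ L)
    (ε : ℝ) (hε : 0 < ε) :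
    ∃ xh : Fin 2 → Fin ⌈(144 * n * L / ε) ^ ((n : ℝ) / 2)⌉₊ → EuclideanSpace ℝ (Fin n),
      (∀ i j, xh i j ∈ {x : EuclideanSpace ℝ (Fin n) | ∀ l, x l ∈ Set.Icc (0:ℝ) 1}) ∧
      (∀ x ∈ {x : EuclideanSpace ℝ (Fin n) | ∀ l, x l ∈ Set.Icc (0:ℝ) 1},
        |f x - ((⨆ j, (φ 0 (xh 0 j) + ⟪s 0 (xh 0 j), x - xh 0 j⟫)) -
                (⨆ j, (φ 1 (xh 1 j) + ⟪s 1 (xh 1 j), x - xh 1 j⟫)))| ≤ ε) ∧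
      (∀ i, ∀ x ∈ {x : EuclideanSpace ℝ (Fin n) | ∀ l, x l ∈ Set.Icc (0:ℝ) 1},
        (⨆ j, (φ i (xh i j) + ⟪s i (xh i j), x - xh i j⟫)) ≤ φ i x) := by
  classical
  set C := {x : EuclideanSpace ℝ (Fin n) | ∀ j, x j ∈ Set.Icc (0:ℝ) 1} with hC
  set K := ⌈(144 * (n:ℝ) * L / ε) ^ ((n : ℝ) / 2)⌉₊ with hK
  set m : ℕ := ⌈Real.sqrt (18 * n * L / ε)⌉₊ with hm
  have hn0 : (0:ℝ) < n := by exact_mod_cast hn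
  have hB : (0:ℝ) < 18 * n * L / ε := by positivity
  have hm1 : 1 ≤ m := Nat.one_le_ceil_iff.mpr (Real.sqrt_pos.mpr hB)
  have hm0 : (0:ℝ) < m := by exact_mod_cast hm1
  have hmsq : 18 * n * L / ε ≤ (m:ℝ) ^ 2 := by
    have h1 : Real.sqrt (18 * n * L / ε) ≤ m := Nat.le_ceil _
    nlinarith [Real.sq_sqrt hB.le, Real.sqrt_nonneg (18 * n * L / ε)]
  have herr : L * n * (3 / (m:ℝ)) ^ 2 ≤ ε / 2 := by
    have h18 : 18 * (n:ℝ) * L ≤ (m:ℝ) ^ 2 * ε := (div_le_iff₀ hε).mp hmsq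
    have heq : L * (n:ℝ) * (3 / (m:ℝ)) ^ 2 = 9 * (n * L) / (m:ℝ) ^ 2 := by
      field_simp; ring
    rw [heq, div_le_iff₀ (by positivity : (0:ℝ) < (m:ℝ)^2)]
    nlinarith
  -- G values in [-1, 2]
  have hG : ∀ i, ∀ x ∈ C, ∀ j, -1 ≤ x j + s i x j / L ∧ x j + s i x j / L ≤ 2 := by
    intro i x hx j
    have habs := abs_le.mp (hsL i x hx j)
    have h1 : s i x j / L ≤ 1 := (div_le_one hL).mpr habs.2
    have h2 : -1 ≤ s i x j / L := by
      rw [le_div_iff₀ hL]; linarith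
    have hxj := hx j
    exact ⟨by linarith [hxj.1], by linarith [hxj.2]⟩
  -- index map
  have hmm : m - 1 < m := Nat.sub_lt hm1 one_pos
  set idx : Fin 2 → EuclideanSpace ℝ (Fin n) → (Fin n → Fin m) :=
    fun i x j => ⟨min (m-1) ⌊(x j + s i x j / L + 1) * m / 3⌋₊,
      lt_of_le_of_lt (min_le_left _ _) hmm⟩ with hidx
  have hcloseidx : ∀ i, ∀ x ∈ C, ∀ y ∈ C, idx i x = idx i y →
      ∀ j, |(x j - y j) + L⁻¹ * (s i x j - s i y j)| ≤ 3 / (m:ℝ) := by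
    intro i x hx y hy hxy j
    have hGx := hG i x hx j
    have hGy := hG i y hy j
    have hj : min (m-1) ⌊(x j + s i x j / L + 1) * m / 3⌋₊
        = min (m-1) ⌊(y j + s i y j / L + 1) * m / 3⌋₊ := by
      have h := congrFun hxy j
      simp only [hidx] at h
      exact congrArg Fin.val h
    have := close_of_idx_eq m hm1 (x j + s i x j / L) (y j + s i y j / L)
      hGx.1 hGx.2 hGy.1 hGy.2 hj
    have heq : (x j - y j) + L⁻¹ * (s i x j - s i y j)
        = (x j + s i x j / L) - (y j + s i y j / L) := by
      rw [div_eq_mul_inv, div_eq_mul_inv]; ring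
    rw [heq]
    exact this
  -- representatives
  set rep : Fin 2 → (Fin n → Fin m) → EuclideanSpace ℝ (Fin n) :=
    fun i z => if h : ∃ x, x ∈ C ∧ idx i x = z then h.choose else 0 with hrepdef
  have hrepC : ∀ i z, rep i z ∈ C := by
    intro i z
    rw [hrepdef]
    by_cases h : ∃ x, x ∈ C ∧ idx i x = z
    · simp only [dif_pos h]; exact h.choose_spec.1
    · simp only [dif_neg h]
      intro j
      simp only [hC]
      constructor <;> norm_num
  have hrepgood : ∀ i, ∀ x ∈ C, rep i (idx i x) ∈ C ∧ idx i (rep i (idx i x)) = idx i x := by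
    intro i x hx
    have h : ∃ y, y ∈ C ∧ idx i y = idx i x := ⟨x, hx, rfl⟩
    rw [hrepdef]
    simp only [dif_pos h]
    exact h.choose_spec
  -- surjection from Fin K
  have hcard : m ^ n ≤ K := count_lemma n hn L ε hL hε
  have hK1 : 1 ≤ K := le_trans (Nat.one_le_iff_ne_zero.mpr (pow_ne_zero n (by omega))) hcard
  haveI : Nonempty (Fin K) := ⟨⟨0, hK1⟩⟩
  haveI : Nonempty (Fin n → Fin m) := ⟨fun _ => ⟨0, hm1⟩⟩
  set d := Fintype.card (Fin n → Fin m) with hd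
  have hdval : d = m ^ n := by
    rw [hd, Fintype.card_fun]; simp
  have hd0 : 0 < d := Fintype.card_pos
  have hdK : d ≤ K := hdval ▸ hcard
  set e : Fin K → (Fin n → Fin m) :=
    fun j => (Fintype.equivFin (Fin n → Fin m)).symm ⟨j % d, Nat.mod_lt _ hd0⟩ with he
  have hesurj : ∀ z, ∃ j : Fin K, e j = z := by
    intro z
    set a := Fintype.equivFin (Fin n → Fin m) z with ha
    refine ⟨⟨a.1, lt_of_lt_of_le a.2 hdK⟩, ?_⟩
    have h1 : e ⟨a.1, lt_of_lt_of_le a.2 hdK⟩ = (Fintype.equivFin (Fin n → Fin m)).symm a := by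
      simp only [he]
      congr 1
      apply Fin.ext
      show (a : ℕ) % d = (a : ℕ)
      exact Nat.mod_eq_of_lt a.2
    rw [h1, ha, Equiv.symm_apply_apply]
  refine ⟨fun i j => rep i (e j), fun i j => hrepC i (e j), ?_, ?_⟩
  · -- approximation bound
    intro x hx
    have hub : ∀ i, (⨆ j, (φ i (rep i (e j)) + ⟪s i (rep i (e j)), x - rep i (e j)⟫)) ≤ φ i x := by
      intro i
      apply ciSup_le
      intro j
      exact hs i (rep i (e j)) (hrepC i (e j)) x hx
    have hlb : ∀ i, φ i x - ε / 2 ≤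
        (⨆ j, (φ i (rep i (e j)) + ⟪s i (rep i (e j)), x - rep i (e j)⟫)) := by
      intro i
      obtain ⟨j, hj⟩ := hesurj (idx i x)
      have hyC := (hrepgood i x hx).1
      have hyidx := (hrepgood i x hx).2
      have hgap := gap_bound L (3 / (m:ℝ)) hL C (φ i) (s i) (hs i) x (rep i (idx i x)) hx hyC
        (hcloseidx i x hx (rep i (idx i x)) hyC hyidx.symm)
      have hbdd : BddAbove (Set.range fun j => (φ i (rep i (e j)) + ⟪s i (rep i (e j)), x - rep i (e j)⟫)) := by
        refine ⟨φ i x, ?_⟩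
        rintro _ ⟨j, rfl⟩
        exact hs i (rep i (e j)) (hrepC i (e j)) x hx
      have hle := le_ciSup hbdd j
      rw [hj] at hle
      linarith
    rw [hf x hx]
    have h0u := hub 0
    have h0l := hlb 0
    have h1u := hub 1
    have h1l := hlb 1
    rw [abs_le]
    constructor <;> linarith
  · intro i x hx
    apply ciSup_le
    intro j
    exact hs i (rep i (e j)) (hrepC i (e j)) x hx
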